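/- Let B be a linear code over F_q where q is a power of a prime p, with F_p ⊆ F_q. Then the dual (over F_p) of the restriction (subfield subcode) B|_{F_p} equals the trace code of the dual: (B|_{F_p})^⊥ = tr(B^⊥), where tr is the trace from F_q to F_p applied coordinatewise. -/

import Mathlib

open Finset
open scoped Classical

namespace Stmt11Aux

variable (K : Type*) [Field K] (n : ℕ)

/-- The standard dot product bilinear form on `Fin n → K`. -/
noncomputable def dotForm : LinearMap.BilinForm K (Fin n → K) :=
  LinearMap.mk₂ K (fun x y => ∑ i, x i * y i)
    (fun x x' y => by simp [add_mul, Finset.sum_add_distrib])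
    (fun a x y => by simp [Finset.mul_sum, mul_assoc])
    (fun x y y' => by simp [mul_add, Finset.sum_add_distrib])
    (fun a x y => by simp [Finset.mul_sum, mul_left_comm])

variable {K n}

@[simp] lemma dotForm_apply (x y : Fin n → K) : dotForm K n x y = ∑ i, x i * y i := rfl

lemma dotForm_isSymm : (dotForm K n).IsSymm := by
  constructor
  intro x y
  simp [mul_comm]

lemma dotForm_nondeg : (dotForm K n).Nondegenerate := by
  refine ⟨fun x hx => ?_, fun x hx => ?_⟩
  · funext i
    have := hx (Pi.single i 1)
    simpa [Pi.single_apply, mul_ite, Finset.sum_ite_eq'] using this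
  · funext i
    have := hx (Pi.single i 1)
    simpa [Pi.single_apply, ite_mul, Finset.sum_ite_eq'] using this

lemma mem_dot_orthogonal {W : Submodule K (Fin n → K)} {x : Fin n → K} :
    x ∈ (dotForm K n).orthogonal W ↔ ∀ c ∈ W, ∑ i, x i * c i = 0 := by
  constructor
  · intro h c hc
    have := h c hc
    simpa [LinearMap.BilinForm.IsOrtho, mul_comm] using this
  · intro h c hc
    have := h c hc
    simpa [LinearMap.BilinForm.IsOrtho, mul_comm] using this

lemma dot_orthogonal_orthogonal (W : Submodule K (Fin n → K)) :
    (dotForm K n).orthogonal ((dotForm K n).orthogonal W) = W :=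
  LinearMap.BilinForm.orthogonal_orthogonal dotForm_nondeg dotForm_isSymm.isRefl W

end Stmt11Aux

noncomputable instance (p n : ℕ) [Fact p.Prime] : Fintype (GaloisField p n) :=
  Fintype.ofFinite _

theorem stmt11 (p r n : ℕ) [Fact p.Prime] (hr : 1 ≤ r)
    (B : Submodule (GaloisField p r) (Fin n → GaloisField p r)) :
    {y : Fin n → ZMod p | ∀ c : Fin n → ZMod p,
        (fun i => algebraMap (ZMod p) (GaloisField p r) (c i)) ∈ B →
          ∑ i, y i * c i = 0} =
      {y : Fin n → ZMod p | ∃ x : Fin n → GaloisField p r,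
        (∀ c ∈ B, ∑ i, x i * c i = 0) ∧
          y = fun i => Algebra.trace (ZMod p) (GaloisField p r) (x i)} := by
  classical
  set K := GaloisField p r
  set ι : ZMod p →+* K := algebraMap (ZMod p) K with hι
  set Tr : K →ₗ[ZMod p] ZMod p := Algebra.trace (ZMod p) K with hTr
  -- the trace map applied coordinatewise
  set trPi : (Fin n → K) →ₗ[ZMod p] (Fin n → ZMod p) :=
    LinearMap.pi (fun i => Tr ∘ₗ LinearMap.proj i) with htrPi
  -- the dual code of B over K
  set BQ : Submodule K (Fin n → K) := (Stmt11Aux.dotForm K n).orthogonal B with hBQ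
  -- the trace code
  set T : Submodule (ZMod p) (Fin n → ZMod p) :=
    Submodule.map trPi (BQ.restrictScalars (ZMod p)) with hT
  -- membership in BQ
  have hmemBQ : ∀ x : Fin n → K, x ∈ BQ ↔ ∀ c ∈ B, ∑ i, x i * c i = 0 := fun x =>
    Stmt11Aux.mem_dot_orthogonal
  -- key trace computation
  have key : ∀ (x : Fin n → K) (c : Fin n → ZMod p),
      ∑ i, Tr (x i) * c i = Tr (∑ i, x i * ι (c i)) := by
    intro x c
    rw [map_sum]
    refine Finset.sum_congr rfl fun i _ => ?_
    have : x i * ι (c i) = c i • x i := by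
      rw [Algebra.smul_def]; ring
    rw [this, map_smul, smul_eq_mul, mul_comm]
  -- RHS as membership in T
  have hRHS : ∀ y : Fin n → ZMod p,
      (∃ x : Fin n → K, (∀ c ∈ B, ∑ i, x i * c i = 0) ∧
        y = fun i => Tr (x i)) ↔ y ∈ T := by
    intro y
    constructor
    · rintro ⟨x, hx, rfl⟩
      exact ⟨x, (hmemBQ x).2 hx, rfl⟩
    · rintro ⟨x, hx, rfl⟩
      exact ⟨x, (hmemBQ x).1 hx, rfl⟩
  ext y
  simp only [Set.mem_setOf_eq, hRHS y]
  -- now show LHS condition ↔ y ∈ T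
  constructor
  · -- hard direction
    intro hy
    refine (hRHS y).2 ?_
    -- it suffices to show y ∈ T^⊥⊥
    rw [← Stmt11Aux.dot_orthogonal_orthogonal (K := ZMod p) T]
    rw [Stmt11Aux.mem_dot_orthogonal]
    intro z hz
    rw [Stmt11Aux.mem_dot_orthogonal] at hz
    -- claim : ι ∘ z ∈ B
    have hzB : (fun i => ι (z i)) ∈ B := by
      have hBdd : (Stmt11Aux.dotForm K n).orthogonal BQ = B :=
        Stmt11Aux.dot_orthogonal_orthogonal B
      rw [← hBdd, Stmt11Aux.mem_dot_orthogonal]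
      intro x hx
      -- show ∑ ι (z i) * x i = 0, using nondegeneracy of the trace form
      set s : K := ∑ i, ι (z i) * x i with hs
      have htr : ∀ α : K, Tr (α * s) = 0 := by
        intro α
        have hαx : α • x ∈ BQ := BQ.smul_mem α hx
        have := hz _ ⟨α • x, hαx, rfl⟩
        -- this : ∑ i, z i * trPi (α • x) i = 0
        have hcalc : ∑ i, z i * trPi (α • x) i = Tr (α * s) := by
          simp only [htrPi, LinearMap.pi_apply, LinearMap.comp_apply, LinearMap.proj_apply]
          calc ∑ i, z i * Tr ((α • x) i) = ∑ i, Tr ((α • x) i) * z i := by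
                simp [mul_comm]
            _ = Tr (∑ i, (α • x) i * ι (z i)) := key _ _
            _ = Tr (α * s) := by
                congr 1
                rw [hs, Finset.mul_sum]
                refine Finset.sum_congr rfl fun i _ => ?_
                simp [Pi.smul_apply, smul_eq_mul]; ring
        rw [hcalc] at this
        exact this
      have hs0 : s = 0 := by
        have := traceForm_nondegenerate (ZMod p) K
        have h0 : ∀ β : K, Algebra.traceForm (ZMod p) K s β = 0 := by
          intro β
          simpa [Algebra.traceForm_apply, mul_comm] using htr β
        exact this.1 s h0
      calc ∑ i, ι (z i) * x i = s := rfl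
        _ = 0 := hs0
    -- conclude
    have := hy z hzB
    calc ∑ i, y i * z i = ∑ i, z i * y i := by simp [mul_comm]
      _ = 0 := by rw [← this]; simp [mul_comm]
  · -- easy direction
    rintro ⟨x, hx, rfl⟩ c hc
    have hx' : ∑ i, x i * ι (c i) = 0 := hx _ hc
    have : ∑ i, trPi x i * c i = Tr (∑ i, x i * ι (c i)) := by
      simpa [htrPi] using key x c
    show ∑ i, trPi x i * c i = 0
    rw [this, hx', map_zero]
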